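/- For θ : ℝ → ℝ twice differentiable and ε ∈ ℝ, define at each α ∈ ℝ (whenever the denominators are nonzero) h(θ, ε)(α) = ((1 + θ(α))² + 2 θ'(α)² − (1 + θ(α)) θ''(α)) / ((1 + θ(α))² + θ'(α)²)^{3/2} + ε · ((1 + θ(α)) cos α + θ'(α) sin α) / ( ((1 + θ(α))² + θ'(α)²)^{1/2} · (1 + ε (1 + θ(α)) cos α) ). Then: (i) for every twice differentiable δθ : ℝ → ℝ and every α ∈ ℝ, the map t ↦ h(t·δθ, 0)(α) is differentiable at t = 0 with derivative −δθ(α) − δθ''(α); (ii) for every α ∈ ℝ, the map ε ↦ h(0, ε)(α) is differentiable at ε = 0 with derivative cos α. -/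

import Mathlib

open Real

noncomputable def pulledBackCurvature (θ : ℝ → ℝ) (ε : ℝ) (α : ℝ) : ℝ :=
  ((1 + θ α) ^ 2 + 2 * (deriv θ α) ^ 2 - (1 + θ α) * deriv (deriv θ) α) /
      (((1 + θ α) ^ 2 + (deriv θ α) ^ 2) ^ ((3:ℝ) / 2)) +
    ε * ((1 + θ α) * Real.cos α + deriv θ α * Real.sin α) /
      ((((1 + θ α) ^ 2 + (deriv θ α) ^ 2) ^ ((1:ℝ) / 2)) *
        (1 + ε * (1 + θ α) * Real.cos α))

/-- Derivatives of the pulled-back curvature at `(θ, ε) = (0, 0)`: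
in direction `δθ` the derivative is `−δθ − δθ''`, and in `ε` it is `cos α`. -/
theorem pulledBackCurvature_derivatives :
    (∀ δθ : ℝ → ℝ, Differentiable ℝ δθ → Differentiable ℝ (deriv δθ) →
      ∀ α : ℝ,
        HasDerivAt (fun t : ℝ => pulledBackCurvature (fun x => t * δθ x) 0 α)
          (-(δθ α) - deriv (deriv δθ) α) 0) ∧
    (∀ α : ℝ,
      HasDerivAt (fun ε : ℝ => pulledBackCurvature (fun _ => 0) ε α)
        (Real.cos α) 0) := by
  constructor
  · intro δθ hδ hδ' α
    have key : (fun t : ℝ => pulledBackCurvature (fun x => t * δθ x) 0 α) =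
        fun t : ℝ =>
          ((1 + t * δθ α) ^ 2 + 2 * (t * deriv δθ α) ^ 2 -
              (1 + t * δθ α) * (t * deriv (deriv δθ) α)) /
            (((1 + t * δθ α) ^ 2 + (t * deriv δθ α) ^ 2) ^ ((3:ℝ) / 2)) := by
      funext t
      have hd1 : deriv (fun x => t * δθ x) = fun x => t * deriv δθ x := by
        funext x; exact deriv_const_mul t (hδ x)
      have hd2 : deriv (deriv (fun x => t * δθ x)) α = t * deriv (deriv δθ) α := by
        rw [hd1]; exact deriv_const_mul t (hδ' α)
      simp [pulledBackCurvature, hd1, hd2]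
    rw [key]
    have h1 : HasDerivAt (fun t : ℝ => 1 + t * δθ α) (δθ α) 0 := by
      simpa using ((hasDerivAt_id (0:ℝ)).mul_const (δθ α)).const_add 1
    have h2 : HasDerivAt (fun t : ℝ => t * deriv δθ α) (deriv δθ α) 0 := by
      simpa using (hasDerivAt_id (0:ℝ)).mul_const (deriv δθ α)
    have h3 : HasDerivAt (fun t : ℝ => t * deriv (deriv δθ) α) (deriv (deriv δθ) α) 0 := by
      simpa using (hasDerivAt_id (0:ℝ)).mul_const (deriv (deriv δθ) α)
    have hD : HasDerivAt (fun t : ℝ => (1 + t * δθ α) ^ 2 + (t * deriv δθ α) ^ 2)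
        (2 * δθ α) 0 := by
      have := (h1.pow 2).add (h2.pow 2)
      refine this.congr_deriv ?_
      norm_num
    have hDpow : HasDerivAt
        (fun t : ℝ => ((1 + t * δθ α) ^ 2 + (t * deriv δθ α) ^ 2) ^ ((3:ℝ) / 2))
        (3 * δθ α) 0 := by
      have := hD.rpow_const (p := (3:ℝ)/2) (Or.inl (by norm_num))
      convert this using 1
      norm_num
      ring
    have hN : HasDerivAt (fun t : ℝ =>
        (1 + t * δθ α) ^ 2 + 2 * (t * deriv δθ α) ^ 2 -
          (1 + t * δθ α) * (t * deriv (deriv δθ) α))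
        (2 * δθ α - deriv (deriv δθ) α) 0 := by
      have := ((h1.pow 2).add ((h2.pow 2).const_mul 2)).sub (h1.mul h3)
      refine this.congr_deriv ?_
      norm_num
    have final := hN.div hDpow (by norm_num [Real.one_rpow])
    refine final.congr_deriv ?_
    norm_num [Real.one_rpow]
    ring
  · intro α
    have h0 : deriv (fun _ : ℝ => (0:ℝ)) = fun _ => 0 := by
      funext x; simp
    have key : (fun ε : ℝ => pulledBackCurvature (fun _ => 0) ε α) =
        fun ε : ℝ => 1 + ε * Real.cos α / (1 + ε * Real.cos α) := by
      funext ε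
      simp [pulledBackCurvature, h0, Real.one_rpow]
    rw [key]
    have hnum : HasDerivAt (fun ε : ℝ => ε * Real.cos α) (Real.cos α) 0 := by
      simpa using (hasDerivAt_id (0:ℝ)).mul_const (Real.cos α)
    have hden : HasDerivAt (fun ε : ℝ => 1 + ε * Real.cos α) (Real.cos α) 0 :=
      hnum.const_add 1
    have hdiv := hnum.div hden (by norm_num)
    have := hdiv.const_add 1
    refine this.congr_deriv ?_
    norm_num
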